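/- Let f : X → ℂ be a continuous map, c : X → X an involution, and conj complex conjugation on ℂ, with f ∘ c = conj ∘ f. Let γ be a path in the upper half plane from ε to -ε (ε > 0 real) avoiding 0. Then the concatenation of γ with conj ∘ γ⁻¹ (the conjugate reversed path) is a loop based at ε whose winding number around 0 is ±1. -/

import Mathlib

open Real Set

lemma seg13 (β : ℝ) (g : ℝ → ℝ) (a b : ℝ)
    (hg : ContinuousOn g (Set.Icc a b))
    (hga : g a ∈ Set.Icc β (β + π))
    (h1 : ∀ x ∈ Set.Ioo (β - π) β, Real.sin x < 0)
    (h2 : ∀ x ∈ Set.Ioo (β + π) (β + 2*π), Real.sin x < 0)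
    (hsin : ∀ t ∈ Set.Icc a b, 0 ≤ Real.sin (g t)) :
    ∀ t ∈ Set.Icc a b, g t ∈ Set.Icc β (β + π) := by
  have hπ := Real.pi_pos
  intro t ht
  have hat : a ≤ t := ht.1
  have hgt : ContinuousOn g (Set.Icc a t) :=
    hg.mono (Set.Icc_subset_Icc_right ht.2)
  constructor
  · by_contra h
    push_neg at h
    set y := max ((g t + β)/2) (β - π/2) with hy
    have hy1 : β - π < y := lt_of_lt_of_le (by linarith) (le_max_right _ _)
    have hy2 : y < β := max_lt (by linarith) (by linarith)
    have hmem : y ∈ Set.Icc (g t) (g a) := by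
      constructor
      · exact le_max_of_le_left (by linarith)
      · linarith [hga.1]
    obtain ⟨s, hs, hgs⟩ := intermediate_value_Icc' hat hgt hmem
    have : Real.sin (g s) < 0 := hgs ▸ h1 y ⟨hy1, hy2⟩
    exact absurd (hsin s ⟨hs.1, le_trans hs.2 ht.2⟩) (not_le.mpr this)
  · by_contra h
    push_neg at h
    set y := min ((g t + (β + π))/2) (β + 3*π/2) with hy
    have hy1 : β + π < y := lt_min (by linarith) (by linarith)
    have hy2 : y < β + 2*π := lt_of_le_of_lt (min_le_right _ _) (by linarith)
    have hmem : y ∈ Set.Icc (g a) (g t) := by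
      constructor
      · linarith [hga.2]
      · exact le_trans (min_le_left _ _) (by linarith)
    obtain ⟨s, hs, hgs⟩ := intermediate_value_Icc hat hgt hmem
    have : Real.sin (g s) < 0 := hgs ▸ h2 y ⟨hy1, hy2⟩
    exact absurd (hsin s ⟨hs.1, le_trans hs.2 ht.2⟩) (not_le.mpr this)

lemma real_angle_one13 (x : ℝ) (h : Complex.exp (x * Complex.I) = 1) :
    ∃ n : ℤ, x = 2 * π * n := by
  rw [Complex.exp_eq_one_iff] at h
  obtain ⟨n, hn⟩ := h
  refine ⟨n, ?_⟩
  have h2 : (x : ℂ) * Complex.I = ((2 * π * n : ℝ) : ℂ) * Complex.I := by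
    rw [hn]; push_cast; ring
  exact_mod_cast Complex.ofReal_injective (mul_right_cancel₀ Complex.I_ne_zero h2)

lemma sin_neg_int13 (n : ℤ) (x : ℝ) (h1 : 2*π*n - π < x) (h2 : x < 2*π*n) :
    Real.sin x < 0 := by
  have hp := Real.sin_add_int_mul_two_pi x (-n)
  rw [← hp]
  apply Real.sin_neg_of_neg_of_neg_pi_lt <;> push_cast <;> linarith

lemma im_eq13 (z : ℂ) (x : ℝ) (h : z = (‖z‖ : ℂ) * Complex.exp (x * Complex.I)) :
    z.im = ‖z‖ * Real.sin x := by
  conv_lhs => rw [h]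
  simp [Complex.mul_im, Complex.exp_ofReal_mul_I_re, Complex.exp_ofReal_mul_I_im]

/-- For a real map `f` (i.e. `f ∘ c = conj ∘ f`) and a path `γ` in the upper
half plane from `ε` to `-ε` avoiding `0`, the loop obtained by concatenating
`γ` with its conjugate reversed path has winding number `±1` around `0`. -/
theorem stmt_13 {X : Type*} [TopologicalSpace X]
    (f : X → ℂ) (hf : Continuous f)
    (c : X → X) (hc : ∀ p, c (c p) = p)
    (hfc : ∀ p, f (c p) = starRingEnd ℂ (f p))
    (ε : ℝ) (hε : 0 < ε)
    (γ : ℝ → ℂ) (hγ : ContinuousOn γ (Set.Icc 0 1))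
    (hγ0 : γ 0 = (ε : ℂ)) (hγ1 : γ 1 = -(ε : ℂ))
    (hne : ∀ t ∈ Set.Icc (0 : ℝ) 1, γ t ≠ 0)
    (him : ∀ t ∈ Set.Ioo (0 : ℝ) 1, 0 < (γ t).im)
    (loop : ℝ → ℂ)
    (hloop : ∀ t : ℝ, loop t =
      if t ≤ 1 / 2 then γ (2 * t) else starRingEnd ℂ (γ (2 - 2 * t))) :
    loop 0 = (ε : ℂ) ∧ loop 1 = (ε : ℂ) ∧
    ∀ θ : ℝ → ℝ, ContinuousOn θ (Set.Icc 0 1) →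
      (∀ t ∈ Set.Icc (0 : ℝ) 1,
        loop t = (‖loop t‖ : ℂ) * Complex.exp (θ t * Complex.I)) →
      θ 1 - θ 0 = 2 * Real.pi ∨ θ 1 - θ 0 = -(2 * Real.pi) := by
  have hπ := Real.pi_pos
  have h0 : loop 0 = (ε : ℂ) := by rw [hloop]; norm_num [hγ0]
  have h1 : loop 1 = (ε : ℂ) := by
    rw [hloop]; norm_num [show (2:ℝ) - 2 * 1 = 0 by ring, hγ0, Complex.conj_ofReal]
  have hhalf : loop (1/2) = -(ε : ℂ) := by
    rw [hloop]; norm_num [show (2:ℝ) * (1/2) = 1 by ring, hγ1]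
  have hε' : (ε : ℂ) ≠ 0 := by exact_mod_cast hε.ne'
  have habs : (‖((ε : ℝ) : ℂ)‖ : ℝ) = ε := by
    rw [Complex.norm_real, Real.norm_eq_abs, abs_of_pos hε]
  refine ⟨h0, h1, ?_⟩
  intro θ hθ hrep
  -- exponentials at endpoints
  have e0 : Complex.exp (θ 0 * Complex.I) = 1 := by
    have h := hrep 0 (by norm_num)
    rw [h0, habs] at h
    have : (ε : ℂ) * Complex.exp (θ 0 * Complex.I) = (ε : ℂ) * 1 := by
      rw [mul_one]; exact h.symm
    exact mul_left_cancel₀ hε' this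
  have e1 : Complex.exp (θ 1 * Complex.I) = 1 := by
    have h := hrep 1 (by norm_num)
    rw [h1, habs] at h
    have : (ε : ℂ) * Complex.exp (θ 1 * Complex.I) = (ε : ℂ) * 1 := by
      rw [mul_one]; exact h.symm
    exact mul_left_cancel₀ hε' this
  have ehalf : Complex.exp (θ (1/2) * Complex.I) = -1 := by
    have h := hrep (1/2) (by norm_num)
    rw [hhalf] at h
    rw [norm_neg, habs] at h
    have : (ε : ℂ) * Complex.exp (θ (1/2) * Complex.I) = (ε : ℂ) * (-1) := by
      rw [mul_neg, mul_one]; exact h.symm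
    exact mul_left_cancel₀ hε' this
  obtain ⟨k, hk⟩ := real_angle_one13 _ e0
  obtain ⟨l, hl⟩ := real_angle_one13 _ e1
  obtain ⟨m, hm⟩ : ∃ m : ℤ, θ (1/2) - π = 2 * π * m := by
    apply real_angle_one13
    push_cast
    rw [sub_mul, Complex.exp_sub, ehalf, Complex.exp_pi_mul_I]
    norm_num
  -- loop nonzero
  have hlz : ∀ t ∈ Set.Icc (0:ℝ) 1, loop t ≠ 0 := by
    intro t ht
    rw [hloop]
    split_ifs with h
    · exact hne (2*t) ⟨by linarith [ht.1], by linarith⟩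
    · simp only [ne_eq, map_eq_zero]
      have h' := not_le.mp h
      exact hne (2 - 2*t) ⟨by linarith [ht.2], by linarith⟩
  -- sin sign on first half
  have hs1 : ∀ t ∈ Set.Icc (0:ℝ) (1/2), 0 ≤ Real.sin (θ t) := by
    intro t ht
    have ht1 : t ∈ Set.Icc (0:ℝ) 1 := ⟨ht.1, by linarith [ht.2]⟩
    have himl : 0 ≤ (loop t).im := by
      rw [hloop t, if_pos ht.2]
      rcases lt_or_eq_of_le ht.1 with hlt | heq
      · rcases lt_or_eq_of_le ht.2 with hlt2 | heq2
        · exact (him (2*t) ⟨by linarith, by linarith⟩).le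
        · subst heq2; norm_num [show (2:ℝ) * (1/2) = 1 by ring, hγ1]
      · rw [← heq]; norm_num [hγ0]
    have habs' : 0 < ‖loop t‖ :=
      norm_pos_iff.mpr (hlz t ht1)
    have him2 := im_eq13 (loop t) (θ t) (hrep t ht1)
    nlinarith
  -- sin sign on second half
  have hs2 : ∀ t ∈ Set.Icc (1/2:ℝ) 1, Real.sin (θ t) ≤ 0 := by
    intro t ht
    have ht1 : t ∈ Set.Icc (0:ℝ) 1 := ⟨by linarith [ht.1], ht.2⟩
    have himl : (loop t).im ≤ 0 := by
      rw [hloop t]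
      split_ifs with h
      · have : t = 1/2 := le_antisymm h ht.1
        subst this
        norm_num [show (2:ℝ) * (1/2) = 1 by ring, hγ1]
      · have h' := not_le.mp h
        have hle : (0:ℝ) ≤ 2 - 2*t := by linarith [ht.2]
        rcases lt_or_eq_of_le hle with hlt | heq
        · have := him (2 - 2*t) ⟨hlt, by linarith⟩
          simp only [Complex.conj_im]
          linarith
        · rw [← heq, hγ0]; simp
    have habs' : 0 < ‖loop t‖ :=
      norm_pos_iff.mpr (hlz t ht1)
    have him2 := im_eq13 (loop t) (θ t) (hrep t ht1)
    nlinarith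
  -- first half: θ stays in [2πk, 2πk + π]
  have key1 := seg13 (2*π*k) θ 0 (1/2)
    (hθ.mono (Set.Icc_subset_Icc_right (by norm_num)))
    (by rw [hk]; exact ⟨le_refl _, by linarith⟩)
    (fun x hx => sin_neg_int13 k x hx.1 hx.2)
    (fun x hx => sin_neg_int13 (k+1) x (by push_cast; linarith [hx.1])
      (by push_cast; linarith [hx.2]))
    hs1
  have hhalfθ := key1 (1/2) ⟨by norm_num, le_refl _⟩
  -- hence θ(1/2) = 2πk + π
  have hmk : m = k := by
    have hA : 2*π*k ≤ 2*π*m + π := by rw [← hm] at *; linarith [hhalfθ.1]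
    have hB : 2*π*m + π ≤ 2*π*k + π := by linarith [hhalfθ.2, hm]
    have h1' : (m:ℝ) ≤ k := by nlinarith
    have h2' : (k:ℝ) < m + 1 := by nlinarith
    have h1i : m ≤ k := by exact_mod_cast h1'
    have h2i : k < m + 1 := by exact_mod_cast h2'
    omega
  have hθhalf : θ (1/2) = 2*π*k + π := by
    rw [hmk] at hm; linarith
  -- second half
  have key2 := seg13 (-(2*π*(k+1))) (fun t => -θ t) (1/2) 1
    ((hθ.mono (Set.Icc_subset_Icc_left (by norm_num))).neg)
    (by
      constructor
      · push_cast; rw [hθhalf]; push_cast; linarith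
      · push_cast; rw [hθhalf]; push_cast; linarith)
    (fun x hx => sin_neg_int13 (-(k+1)) x (by push_cast; push_cast at hx; linarith [hx.1])
      (by push_cast; push_cast at hx; linarith [hx.2]))
    (fun x hx => sin_neg_int13 (-k) x (by push_cast; push_cast at hx; linarith [hx.1])
      (by push_cast; push_cast at hx; linarith [hx.2]))
    (by
      intro t ht
      simp only [Real.sin_neg]
      linarith [hs2 t ht])
  have hfin := key2 1 ⟨by norm_num, le_refl _⟩
  simp only [Set.mem_Icc] at hfin
  -- hence θ 1 = 2π(k+1)
  have hlk : l = k + 1 := by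
    have hA : -(2*π*(k+1)) ≤ -θ 1 := hfin.1
    have hB : -θ 1 ≤ -(2*π*(k+1)) + π := hfin.2
    rw [hl] at hA hB
    have h1' : (l:ℝ) ≤ k + 1 := by push_cast at hA ⊢; nlinarith
    have h2' : (k:ℝ) + 1 < l + 1 := by push_cast at hB ⊢; nlinarith
    have h1i : l ≤ k + 1 := by exact_mod_cast h1'
    have h2i : (k:ℤ) + 1 < l + 1 := by exact_mod_cast h2'
    omega
  left
  rw [hl, hk, hlk]
  push_cast
  ring
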